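/- (Čencov's theorem) For each n ∈ ℕ let A_n be a continuous symmetric (0,2)-tensor field on P_n. Assume that for any n, N ∈ ℕ with n ≤ N and each Markov embedding F : P_n → P_N, the pullback of A_N by F equals A_n. Then there exists λ ∈ ℝ such that A_n = λ g_n^F for every n ∈ ℕ. -/

import Mathlib

open Finset

noncomputable section

/-- `Psim n` is the space `P_n` of positive probability measures on
`Ω_{n+1} = {1,…,n+1}`, viewed as a subset of `ℝ^{n+1}`. -/
def Psim (n : ℕ) : Set (Fin (n + 1) → ℝ) :=
  {p | (∀ i, p i ∈ Set.Ioo (0 : ℝ) 1) ∧ ∑ i, p i = 1}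

/-- The tangent space of `P_n` (at any point): vectors in `ℝ^{n+1}` whose
coordinates sum to zero. -/
def Tang (n : ℕ) : Set (Fin (n + 1) → ℝ) :=
  {X | ∑ i, X i = 0}

/-- `B` is a symmetric bilinear form on `ℝ^{n+1}` (the value of a symmetric
`(0,2)`-tensor field at a point). -/
def IsSymmBilin {n : ℕ} (B : (Fin (n + 1) → ℝ) → (Fin (n + 1) → ℝ) → ℝ) : Prop :=
  (∀ X Y, B X Y = B Y X) ∧
  (∀ (c : ℝ) (X X' Y : Fin (n + 1) → ℝ), B (c • X + X') Y = c * B X Y + B X' Y)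

/-- `A` is a family of symmetric `(0,2)`-tensor fields `A_n` on `P_n`
(indices `n ≥ 1`, matching the paper's `ℕ = {1,2,…}`). -/
def SymmTF (A : (n : ℕ) → (Fin (n + 1) → ℝ) → (Fin (n + 1) → ℝ) → (Fin (n + 1) → ℝ) → ℝ) :
    Prop :=
  ∀ n : ℕ, 0 < n → ∀ p ∈ Psim n, IsSymmBilin (A n p)

/-- The scalar patched Markov embedding `G_n^{α,σ} : P_n → P_{n+1}`,
`G_n^{α,σ}(p) = α ∑_{i ∈ Ω_{n+1}} p(i) δ_{σ(i)} + (1-α) δ_{σ(n+2)}`. -/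
def sPatch (n : ℕ) (α : ℝ) (σ : Equiv.Perm (Fin (n + 2))) (p : Fin (n + 1) → ℝ) :
    Fin (n + 2) → ℝ := fun I =>
  α * ∑ i : Fin (n + 1), p i * (if σ i.castSucc = I then 1 else 0) +
    (1 - α) * (if σ (Fin.last (n + 1)) = I then 1 else 0)

/-- The differential of `G_n^{α,σ}`: `dG(X) = α ∑_i X^i δ_{σ(i)}`. -/
def sPatchD (n : ℕ) (α : ℝ) (σ : Equiv.Perm (Fin (n + 2))) (X : Fin (n + 1) → ℝ) :
    Fin (n + 2) → ℝ := fun I =>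
  α * ∑ i : Fin (n + 1), X i * (if σ i.castSucc = I then 1 else 0)

/-- A general patched Markov embedding `G_n : P_n → P_{n+1}` with weights `a_i`:
`G_n(p) = ∑_i p(i) (a_i δ_{σ(i)} + (1-a_i) δ_{σ(n+2)})`. -/
def patch (n : ℕ) (a : Fin (n + 1) → ℝ) (σ : Equiv.Perm (Fin (n + 2)))
    (p : Fin (n + 1) → ℝ) : Fin (n + 2) → ℝ := fun I =>
  ∑ i : Fin (n + 1), p i * (a i * (if σ i.castSucc = I then 1 else 0) +
    (1 - a i) * (if σ (Fin.last (n + 1)) = I then 1 else 0))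

/-- The differential of a patched Markov embedding. -/
def patchD (n : ℕ) (a : Fin (n + 1) → ℝ) (σ : Equiv.Perm (Fin (n + 2)))
    (X : Fin (n + 1) → ℝ) : Fin (n + 2) → ℝ := fun I =>
  ∑ i : Fin (n + 1), X i * (a i * (if σ i.castSucc = I then 1 else 0) +
    (1 - a i) * (if σ (Fin.last (n + 1)) = I then 1 else 0))

/-- Invariance of the family `{A_n}` under scalar patched Markov embeddings:
the pullback of `A_{n+1}` by each `G_n^{α,σ}` equals `A_n`. -/
def InvariantSP
    (A : (n : ℕ) → (Fin (n + 1) → ℝ) → (Fin (n + 1) → ℝ) → (Fin (n + 1) → ℝ) → ℝ) : Prop :=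
  ∀ n : ℕ, 0 < n → ∀ α ∈ Set.Ioo (0 : ℝ) 1, ∀ σ : Equiv.Perm (Fin (n + 2)),
    ∀ p ∈ Psim n, ∀ X ∈ Tang n, ∀ Y ∈ Tang n,
      A (n + 1) (sPatch n α σ p) (sPatchD n α σ X) (sPatchD n α σ Y) = A n p X Y

/-- The vector field `Z_i^n` on `P_n`, with (constant) coordinates
`e_i - (1/(n+1)) ∑_j e_j`. -/
def Zvec (n : ℕ) (i : Fin (n + 1)) : Fin (n + 1) → ℝ :=
  fun k => (if k = i then 1 else 0) - 1 / (n + 1)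

/-- The uniform probability measure `b_n ∈ P_n`. -/
def bunif (n : ℕ) : Fin (n + 1) → ℝ := fun _ => 1 / (n + 1)

/-- The point `p_u ∈ P_1`: `p_u(1) = u`, `p_u(2) = 1 - u`. -/
def pu (u : ℝ) : Fin 2 → ℝ := ![u, 1 - u]

/-- The tensor field `A_n^d(X,Y)_p = ∑_i X^i Y^i / p(i)²`. -/
def Ad (n : ℕ) (p X Y : Fin (n + 1) → ℝ) : ℝ := ∑ i, X i * Y i / (p i) ^ 2

/-- The tensor field `A_n^s(X,Y)_p = (∑_i X^i/p(i)) (∑_j Y^j/p(j))`. -/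
def As (n : ℕ) (p X Y : Fin (n + 1) → ℝ) : ℝ := (∑ i, X i / p i) * (∑ j, Y j / p j)

/-- The Fisher metric `g_n^F(X,Y)_p = ∑_i X^i Y^i / p(i)`. -/
def Fish (n : ℕ) (p X Y : Fin (n + 1) → ℝ) : ℝ := ∑ i, X i * Y i / p i

/-- The point `ψ_u^σ(α) = G_1^{α,σ}(p_u) ∈ P_2` (the indices `1,2,3` of `Ω_3`
are `0,1,2 : Fin 3`). -/
def psiPt (α u : ℝ) (σ : Equiv.Perm (Fin 3)) : Fin 3 → ℝ := sPatch 1 α σ (pu u)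

/-- `E^k ⊂ TP_2`: the line spanned by `Z_i^2 - Z_j^2 = e_i - e_j` where
`{i,j,k} = {0,1,2}`; equivalently, the sum-zero vectors vanishing at `k`. -/
def Esub (k : Fin 3) : Set (Fin 3 → ℝ) := {W | (∑ i, W i = 0) ∧ W k = 0}

/-- `u_α^{ij}` (formed with `σ = id`). -/
def uRatio (α u : ℝ) (i j : Fin 3) : ℝ :=
  psiPt α u (Equiv.refl (Fin 3)) i /
    (psiPt α u (Equiv.refl (Fin 3)) i + psiPt α u (Equiv.refl (Fin 3)) j)

/-- The image `dH^{ij}_q(Z_1^1) = ((q(i)+q(j))/2) (Z_i^2 - Z_j^2)` of `Z_1^1`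
under the differential of `H_q^{ij} : P_1 → P_2`. -/
def dHvec (q : Fin 3 → ℝ) (i j : Fin 3) : Fin 3 → ℝ :=
  ((q i + q j) / 2) • (Zvec 2 i - Zvec 2 j)

/-- Condition (C1) for `A_2`. -/
def CondC1 (A2 : (Fin 3 → ℝ) → (Fin 3 → ℝ) → (Fin 3 → ℝ) → ℝ) : Prop :=
  ∃ r : ℝ → ℝ, (∀ t : ℝ, 0 < t → 0 < r t) ∧ (∀ t : ℝ, 0 < t → r t * r (1 / t) = 1) ∧
    ∀ α ∈ Set.Ioo (0 : ℝ) 1, ∀ u ∈ Set.Ioo (0 : ℝ) 1, ∀ σ : Equiv.Perm (Fin 3),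
      ∀ W1 W2 W3 : Fin 3 → ℝ, W1 ∈ Esub (σ 0) → W2 ∈ Esub (σ 1) → W3 ∈ Esub (σ 2) →
        W3 = W1 + W2 →
        A2 (psiPt α u σ) W3 W1 = r (u / (1 - u)) * A2 (psiPt α u σ) W3 W2

/-- Condition (C2) for `A_1` and `A_2`: `A_1` is positive semidefinite and
degenerate at `b_1`, and the parallelism identity holds. -/
def CondC2 (A1 : (Fin 2 → ℝ) → (Fin 2 → ℝ) → (Fin 2 → ℝ) → ℝ)
    (A2 : (Fin 3 → ℝ) → (Fin 3 → ℝ) → (Fin 3 → ℝ) → ℝ) : Prop :=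
  (∀ p ∈ Psim 1, ∀ X ∈ Tang 1, 0 ≤ A1 p X X) ∧
  (∃ X ∈ Tang 1, X ≠ 0 ∧ ∀ Y ∈ Tang 1, A1 (bunif 1) X Y = 0) ∧
  (∀ α ∈ Set.Ioo (0 : ℝ) 1, ∀ u ∈ Set.Ioo (0 : ℝ) 1, ∀ σ : Equiv.Perm (Fin 3),
    ∀ i j k l : Fin 3, i ≠ j → k ≠ l →
      A2 (psiPt α u σ) (dHvec (psiPt α u σ) (σ i) (σ j)) (dHvec (psiPt α u σ) (σ k) (σ l)) =
        (Real.sign (2 * uRatio α u i j - 1) *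
            Real.sqrt (A1 (pu (uRatio α u i j)) (Zvec 1 0) (Zvec 1 0))) *
        (Real.sign (2 * uRatio α u k l - 1) *
            Real.sqrt (A1 (pu (uRatio α u k l)) (Zvec 1 0) (Zvec 1 0))))

/-- `H : P_m → P_n` (together with its linear differential `dH`) is a
composition of scalar patched Markov embeddings. -/
inductive IsSPMComp :
    (m n : ℕ) → ((Fin (m + 1) → ℝ) → (Fin (n + 1) → ℝ)) →
      ((Fin (m + 1) → ℝ) → (Fin (n + 1) → ℝ)) → Prop
  | refl (m : ℕ) : IsSPMComp m m id id
  | step {m n : ℕ} {H dH : (Fin (m + 1) → ℝ) → (Fin (n + 1) → ℝ)} (α : ℝ)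
      (hα : α ∈ Set.Ioo (0 : ℝ) 1) (σ : Equiv.Perm (Fin (n + 2)))
      (h : IsSPMComp m n H dH) :
      IsSPMComp m (n + 1) (fun p => sPatch n α σ (H p)) (fun X => sPatchD n α σ (dH X))

/-- `Q` is a Markov partition: each `Q i` is a probability measure on `Ω_{N+1}`
and the supports of the `Q i` are pairwise disjoint with union `Ω_{N+1}`. -/
def IsMarkovPartition {n N : ℕ} (Q : Fin (n + 1) → Fin (N + 1) → ℝ) : Prop :=
  (∀ i, (∀ I, 0 ≤ Q i I) ∧ ∑ I, Q i I = 1) ∧ (∀ I, ∃! i, Q i I ≠ 0)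

/-- The Markov embedding `F(p) = ∑_i p(i) Q_i` induced by `Q` (the same formula
gives its differential on tangent vectors). -/
def mEmb {n N : ℕ} (Q : Fin (n + 1) → Fin (N + 1) → ℝ) (p : Fin (n + 1) → ℝ) :
    Fin (N + 1) → ℝ := fun I => ∑ i, p i * Q i I

/-- basis tangent vectors `e_0 - e_j` -/
def dv (n : ℕ) (j : Fin (n + 1)) : Fin (n + 1) → ℝ :=
  fun k => (if k = 0 then 1 else 0) - (if k = j then 1 else 0)

lemma dv_mem_Tang (n : ℕ) (j : Fin (n + 1)) : dv n j ∈ Tang n := by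
  simp [Tang, dv, Finset.sum_sub_distrib]

lemma dv_zero (n : ℕ) : dv n 0 = 0 := by
  funext k; simp [dv]

namespace IsSymmBilin

variable {n : ℕ} {B : (Fin (n + 1) → ℝ) → (Fin (n + 1) → ℝ) → ℝ}

lemma zero_left (hB : IsSymmBilin B) (Y : Fin (n + 1) → ℝ) : B 0 Y = 0 := by
  have h2 := hB.2 1 (0 : Fin (n + 1) → ℝ) 0 Y
  simp at h2; linarith

lemma add_left (hB : IsSymmBilin B) (X X' Y : Fin (n + 1) → ℝ) : B (X + X') Y = B X Y + B X' Y := by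
  have h2 := hB.2 1 X X' Y
  simpa using h2

lemma smul_left (hB : IsSymmBilin B) (c : ℝ) (X Y : Fin (n + 1) → ℝ) : B (c • X) Y = c * B X Y := by
  have h2 := hB.2 c X 0 Y
  simpa [hB.zero_left] using h2

lemma neg_left (hB : IsSymmBilin B) (X Y : Fin (n + 1) → ℝ) : B (-X) Y = -B X Y := by
  have := hB.smul_left (-1) X Y
  simpa using this

lemma sub_left (hB : IsSymmBilin B) (X X' Y : Fin (n + 1) → ℝ) : B (X - X') Y = B X Y - B X' Y := by
  rw [sub_eq_add_neg, hB.add_left, hB.neg_left]; ring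

lemma smul_right (hB : IsSymmBilin B) (c : ℝ) (X Y : Fin (n + 1) → ℝ) : B X (c • Y) = c * B X Y := by
  rw [hB.1, hB.smul_left, hB.1]

lemma sub_right (hB : IsSymmBilin B) (X Y Y' : Fin (n + 1) → ℝ) : B X (Y - Y') = B X Y - B X Y' := by
  rw [hB.1, hB.sub_left, hB.1 Y X, hB.1 Y' X]

lemma sum_left (hB : IsSymmBilin B) {ι : Type*} (s : Finset ι) (f : ι → (Fin (n + 1) → ℝ)) (Y : Fin (n + 1) → ℝ) :
    B (∑ i ∈ s, f i) Y = ∑ i ∈ s, B (f i) Y := by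
  classical
  induction s using Finset.induction_on with
  | empty => simpa using hB.zero_left Y
  | insert a s' hx ih =>
                    rw [Finset.sum_insert hx, hB.add_left, ih, Finset.sum_insert hx]

lemma sum_right (hB : IsSymmBilin B) {ι : Type*} (s : Finset ι) (X : Fin (n + 1) → ℝ) (f : ι → (Fin (n + 1) → ℝ)) :
    B X (∑ i ∈ s, f i) = ∑ i ∈ s, B X (f i) := by
  rw [hB.1, hB.sum_left]
  exact Finset.sum_congr rfl fun i _ => hB.1 _ _

end IsSymmBilin

lemma IsSymmBilin.zero_right {n : ℕ} {B : (Fin (n + 1) → ℝ) → (Fin (n + 1) → ℝ) → ℝ}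
    (hB : IsSymmBilin B) (X : Fin (n + 1) → ℝ) : B X 0 = 0 := by
  rw [hB.1]; exact hB.zero_left X

lemma one_ne_zero_fin {n : ℕ} (hn : 0 < n) : (1 : Fin (n + 1)) ≠ 0 := by
  simp [Fin.ext_iff, Fin.val_one, Nat.mod_eq_of_lt (by omega : 1 < n + 1)]

lemma dv_swap1 {n : ℕ} (hn : 0 < n) (i : Fin (n + 1)) (hi : i ≠ 0) :
    (fun k => dv n i (Equiv.swap 1 i k)) = dv n 1 := by
  funext k
  have h0 : Equiv.swap 1 i k = 0 ↔ k = 0 := by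
    rw [Equiv.swap_apply_eq_iff, Equiv.swap_apply_of_ne_of_ne (Ne.symm (one_ne_zero_fin hn)) (Ne.symm hi)]
  have h1 : Equiv.swap 1 i k = i ↔ k = 1 := by
    rw [Equiv.swap_apply_eq_iff, Equiv.swap_apply_right]
  simp only [dv, h0, h1]

lemma dv_swap0_self {n : ℕ} (i : Fin (n + 1)) (hi : i ≠ 0) :
    (fun k => dv n i (Equiv.swap 0 i k)) = -(dv n i) := by
  funext k
  have h0 : Equiv.swap 0 i k = 0 ↔ k = i := by
    rw [Equiv.swap_apply_eq_iff, Equiv.swap_apply_left]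
  have h1 : Equiv.swap 0 i k = i ↔ k = 0 := by
    rw [Equiv.swap_apply_eq_iff, Equiv.swap_apply_right]
  simp only [dv, h0, h1, Pi.neg_apply]
  ring

lemma dv_swap0_other {n : ℕ} (i j : Fin (n + 1)) (hi : i ≠ 0) (hj : j ≠ 0) (hij : i ≠ j) :
    (fun k => dv n j (Equiv.swap 0 i k)) = dv n j - dv n i := by
  funext k
  have h0 : Equiv.swap 0 i k = 0 ↔ k = i := by
    rw [Equiv.swap_apply_eq_iff, Equiv.swap_apply_left]
  have h1 : Equiv.swap 0 i k = j ↔ k = j := by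
    rw [Equiv.swap_apply_eq_iff, Equiv.swap_apply_of_ne_of_ne hj (Ne.symm hij)]
  simp only [dv, h0, h1, Pi.sub_apply]
  by_cases hk0 : k = 0 <;> by_cases hki : k = i <;> by_cases hkj : k = j <;>
    simp_all <;> ring_nf <;> simp_all

lemma bilin_struct {n : ℕ} (hn : 0 < n) {B : (Fin (n + 1) → ℝ) → (Fin (n + 1) → ℝ) → ℝ}
    (hB : IsSymmBilin B)
    (hperm : ∀ σ : Equiv.Perm (Fin (n + 1)), ∀ X ∈ Tang n, ∀ Y ∈ Tang n,
      B (fun k => X (σ k)) (fun k => Y (σ k)) = B X Y)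
    {X Y : Fin (n + 1) → ℝ} (hX : X ∈ Tang n) (hY : Y ∈ Tang n) :
    B X Y = B (dv n 1) (dv n 1) / 2 * ∑ i, X i * Y i := by
  set a := B (dv n 1) (dv n 1) with ha
  -- values on the basis
  have key1 : ∀ i : Fin (n + 1), i ≠ 0 → B (dv n i) (dv n i) = a := by
    intro i hi
    have h := hperm (Equiv.swap 1 i) (dv n i) (dv_mem_Tang n i) (dv n i) (dv_mem_Tang n i)
    rw [dv_swap1 hn i hi] at h
    exact h.symm
  have key2 : ∀ i j : Fin (n + 1), i ≠ 0 → j ≠ 0 → i ≠ j → B (dv n i) (dv n j) = a / 2 := by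
    intro i j hi hj hij
    have h := hperm (Equiv.swap 0 i) (dv n i) (dv_mem_Tang n i) (dv n j) (dv_mem_Tang n j)
    rw [dv_swap0_self i hi, dv_swap0_other i j hi hj hij, hB.neg_left, hB.sub_right,
      key1 i hi] at h
    linarith
  have hval : ∀ i j : Fin (n + 1), B (dv n i) (dv n j) =
      a / 2 * ((1 - (if i = 0 then (1 : ℝ) else 0)) *
        ((if i = j then (1 : ℝ) else 0) + 1 - (if j = 0 then (1 : ℝ) else 0))) := by
    intro i j
    by_cases hi : i = 0
    · subst hi; rw [dv_zero, hB.zero_left]; simp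
    · by_cases hj : j = 0
      · subst hj; rw [dv_zero, hB.zero_right]
        simp [hi, Ne.symm hi]
      · by_cases hij : i = j
        · subst hij; rw [key1 i hi]; simp [hi]; ring
        · rw [key2 i j hi hj hij]; simp [hi, hj, hij]
  -- expansion of tangent vectors in the dv basis
  have hexp : ∀ Z : Fin (n + 1) → ℝ, Z ∈ Tang n → Z = ∑ i, (-Z i) • dv n i := by
    intro Z hZ
    have hz : ∑ i, Z i = 0 := hZ
    funext k
    simp only [Finset.sum_apply, Pi.smul_apply, smul_eq_mul, dv, mul_sub, mul_ite, mul_one,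
      mul_zero, Finset.sum_sub_distrib]
    rw [Finset.sum_ite_eq Finset.univ k (fun i => -Z i)]
    by_cases hk : k = 0 <;> simp [hk, Finset.sum_neg_distrib, hz]
  have hBXY : B X Y = ∑ i, ∑ j, (X i * Y j) * B (dv n i) (dv n j) := by
    conv_lhs => rw [hexp X hX, hexp Y hY]
    rw [hB.sum_left]
    refine Finset.sum_congr rfl fun i _ => ?_
    rw [hB.smul_left, hB.sum_right, Finset.mul_sum]
    refine Finset.sum_congr rfl fun j _ => ?_
    rw [hB.smul_right]
    ring
  rw [hBXY]
  have hYsum : ∑ j, Y j = 0 := hY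
  have hXsum : ∑ i, X i = 0 := hX
  have inner : ∀ i : Fin (n + 1),
      ∑ j, (X i * Y j) * B (dv n i) (dv n j) =
        (X i * (1 - (if i = 0 then (1 : ℝ) else 0)) * (a / 2)) * (Y i - Y 0) := by
    intro i
    have h1 : ∑ j, Y j * (if i = j then (1 : ℝ) else 0) = Y i := by
      simp [mul_ite, Finset.sum_ite_eq]
    have h2 : ∑ j, Y j * (if j = 0 then (1 : ℝ) else 0) = Y 0 := by
      simp [mul_ite, Finset.sum_ite_eq']
    calc ∑ j, (X i * Y j) * B (dv n i) (dv n j)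
        = (X i * (1 - (if i = 0 then (1 : ℝ) else 0)) * (a / 2)) *
          ∑ j, (Y j * (if i = j then (1 : ℝ) else 0) + Y j - Y j * (if j = 0 then (1 : ℝ) else 0)) := by
          rw [Finset.mul_sum]
          refine Finset.sum_congr rfl fun j _ => ?_
          rw [hval i j]; ring
      _ = _ := by
          rw [Finset.sum_sub_distrib, Finset.sum_add_distrib, h1, h2, hYsum]
          ring
  rw [Finset.sum_congr rfl fun i _ => inner i]
  have g1 : ∑ i, X i * (if i = 0 then (1 : ℝ) else 0) = X 0 := by
    simp [mul_ite, Finset.sum_ite_eq']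
  have g2 : ∑ i, (X i * (if i = 0 then (1 : ℝ) else 0)) * Y i = X 0 * Y 0 := by
    rw [Finset.sum_congr rfl (fun i _ => by rw [mul_comm (X i) _, mul_assoc] :
      ∀ i ∈ Finset.univ, (X i * (if i = 0 then (1 : ℝ) else 0)) * Y i
        = (if i = 0 then (1 : ℝ) else 0) * (X i * Y i))]
    simp [ite_mul, Finset.sum_ite_eq]
  calc ∑ i, (X i * (1 - (if i = 0 then (1 : ℝ) else 0)) * (a / 2)) * (Y i - Y 0)
      = ∑ i, ((a / 2) * (X i * Y i) - (a / 2) * ((X i * (if i = 0 then (1 : ℝ) else 0)) * Y i)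
          - (a / 2) * Y 0 * X i + (a / 2) * Y 0 * (X i * (if i = 0 then (1 : ℝ) else 0))) := by
        refine Finset.sum_congr rfl fun i _ => ?_; ring
    _ = a / 2 * ∑ i, X i * Y i := by
        rw [Finset.sum_add_distrib, Finset.sum_sub_distrib, Finset.sum_sub_distrib,
          ← Finset.mul_sum, ← Finset.mul_sum, g2, ← Finset.mul_sum, ← Finset.mul_sum, g1, hXsum]
        ring

section Main

variable (A : (n : ℕ) → (Fin (n + 1) → ℝ) → (Fin (n + 1) → ℝ) → (Fin (n + 1) → ℝ) → ℝ)

def MarkovInv : Prop :=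
  ∀ n N : ℕ, 0 < n → n ≤ N → ∀ Q : Fin (n + 1) → Fin (N + 1) → ℝ,
    IsMarkovPartition Q → ∀ p ∈ Psim n, ∀ X ∈ Tang n, ∀ Y ∈ Tang n,
      A N (mEmb Q p) (mEmb Q X) (mEmb Q Y) = A n p X Y

lemma perm_inv (hinv : MarkovInv A) {n : ℕ} (hn : 0 < n) (σ : Equiv.Perm (Fin (n + 1)))
    {p X Y : Fin (n + 1) → ℝ} (hp : p ∈ Psim n) (hX : X ∈ Tang n) (hY : Y ∈ Tang n) :
    A n (fun k => p (σ k)) (fun k => X (σ k)) (fun k => Y (σ k)) = A n p X Y := by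
  classical
  set Q : Fin (n + 1) → Fin (n + 1) → ℝ := fun i I => if σ I = i then 1 else 0 with hQ
  have hemb : ∀ Z : Fin (n + 1) → ℝ, mEmb Q Z = fun k => Z (σ k) := by
    intro Z; funext I
    simp [mEmb, hQ, mul_ite, Finset.sum_ite_eq]
  have hmp : IsMarkovPartition Q := by
    constructor
    · intro i
      constructor
      · intro I; by_cases h : σ I = i <;> simp [hQ, h]
      · simp [hQ, Equiv.apply_eq_iff_eq_symm_apply, Finset.sum_ite_eq']
    · intro I
      refine ⟨σ I, by simp [hQ], ?_⟩
      intro i hi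
      by_contra h
      exact hi (by simp [hQ, Ne.symm h])
  have h := hinv n n hn le_rfl Q hmp p hp X hX Y hY
  rw [hemb, hemb, hemb] at h
  exact h

lemma bunif_mem {n : ℕ} (hn : 0 < n) : bunif n ∈ Psim n := by
  have h1 : (1 : ℝ) ≤ (n : ℝ) := by exact_mod_cast hn
  constructor
  · intro i
    simp only [bunif, Set.mem_Ioo]
    constructor
    · positivity
    · rw [div_lt_one (by positivity)]
      linarith
  · simp only [bunif, Finset.sum_const, Finset.card_univ, Fintype.card_fin, nsmul_eq_mul]
    push_cast
    field_simp

lemma rat_point_mem {n N : ℕ} (hn : 0 < n) (m : Fin (n + 1) → ℕ) (hm : ∀ i, 0 < m i)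
    (hM : ∑ i, m i = N + 1) : (fun i => (m i : ℝ) / (N + 1)) ∈ Psim n := by
  have hNpos : (0 : ℝ) < (N : ℝ) + 1 := by positivity
  constructor
  · intro i
    constructor
    · exact div_pos (by exact_mod_cast hm i) hNpos
    · rw [div_lt_one hNpos]
      have hlt : m i < ∑ j, m j := by
        set j : Fin (n + 1) := if i = 0 then 1 else 0 with hj'
        have hj : j ≠ i := by
          by_cases h : i = 0
          · rw [hj', if_pos h, h]; exact one_ne_zero_fin hn
          · rw [hj', if_neg h]; exact Ne.symm h
        exact Finset.single_lt_sum hj (Finset.mem_univ i) (Finset.mem_univ j) (hm j)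
          (fun k _ _ => Nat.zero_le _)
      rw [hM] at hlt
      exact_mod_cast hlt
  · rw [← Finset.sum_div, show ∑ i, ((m i : ℝ)) = ((N : ℝ) + 1) from by exact_mod_cast hM]
    field_simp

lemma rat_formula (hsymm : SymmTF A) (hinv : MarkovInv A) {n N : ℕ} (hn : 0 < n)
    (m : Fin (n + 1) → ℕ) (hm : ∀ i, 0 < m i) (hM : ∑ i, m i = N + 1)
    {X Y : Fin (n + 1) → ℝ} (hX : X ∈ Tang n) (hY : Y ∈ Tang n) :
    A n (fun i => (m i : ℝ) / (N + 1)) X Y =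
      A N (bunif N) (dv N 1) (dv N 1) / 2 * ∑ i, X i * Y i / (m i : ℝ) := by
  classical
  have hNn : n ≤ N := by
    have h1 : n + 1 ≤ ∑ i, m i := by
      calc n + 1 = ∑ _i : Fin (n + 1), 1 := by simp
      _ ≤ ∑ i, m i := Finset.sum_le_sum fun i _ => hm i
    omega
  have hN : 0 < N := lt_of_lt_of_le hn hNn
  have hcard : Fintype.card (Fin (N + 1)) = Fintype.card (Σ i : Fin (n + 1), Fin (m i)) := by
    simp [Fintype.card_sigma, hM]
  set e : Fin (N + 1) ≃ Σ i : Fin (n + 1), Fin (m i) := Fintype.equivOfCardEq hcard with he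
  have hcount : ∀ g : Fin (n + 1) → ℝ, ∑ I : Fin (N + 1), g ((e I).1) = ∑ i, (m i : ℝ) * g i := by
    intro g
    rw [Equiv.sum_comp e (fun s => g s.1), ← Finset.univ_sigma_univ, Finset.sum_sigma]
    simp [Finset.sum_const, nsmul_eq_mul]
  have hmz : ∀ i, (m i : ℝ) ≠ 0 := fun i => Nat.cast_ne_zero.mpr (hm i).ne'
  set Q : Fin (n + 1) → Fin (N + 1) → ℝ :=
    fun i I => if (e I).1 = i then ((m i : ℝ))⁻¹ else 0 with hQdef
  have hmp : IsMarkovPartition Q := by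
    constructor
    · intro i
      refine ⟨fun I => ?_, ?_⟩
      · simp only [hQdef]
        split
        · exact inv_nonneg.mpr (Nat.cast_nonneg _)
        · exact le_rfl
      · have h0 : ∑ I, Q i I = ∑ I : Fin (N + 1),
            (fun j => if j = i then ((m i : ℝ))⁻¹ else 0) ((e I).1) := by
          refine Finset.sum_congr rfl fun I _ => ?_
          simp [hQdef]
        rw [h0]
        refine (hcount (fun j => if j = i then ((m i : ℝ))⁻¹ else 0)).trans ?_
        simp only [mul_ite, mul_zero]
        rw [Finset.sum_ite_eq' Finset.univ i (fun j => (m j : ℝ) * (m i : ℝ)⁻¹)]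
        simp [hmz i]
    · intro I
      refine ⟨(e I).1, by simp [hQdef, hmz], fun i hi => ?_⟩
      by_contra h
      exact hi (by simp [hQdef, Ne.symm h])
  have hembp : ∀ Z : Fin (n + 1) → ℝ,
      mEmb Q Z = fun I => Z ((e I).1) * ((m ((e I).1) : ℝ))⁻¹ := by
    intro Z; funext I
    simp [mEmb, hQdef, mul_ite, Finset.sum_ite_eq]
  set p : Fin (n + 1) → ℝ := fun i => (m i : ℝ) / (N + 1) with hpdef
  have hp : p ∈ Psim n := rat_point_mem hn m hm hM
  have hpemb : mEmb Q p = bunif N := by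
    rw [hembp]; funext I
    have := hmz (e I).1
    simp only [hpdef, bunif]
    field_simp
  have hTangQ : ∀ Z : Fin (n + 1) → ℝ, Z ∈ Tang n → mEmb Q Z ∈ Tang N := by
    intro Z hZ
    have h1 : ∑ I, (mEmb Q Z) I = ∑ i, (m i : ℝ) * (Z i * (m i : ℝ)⁻¹) := by
      simp only [hembp Z]; exact hcount fun i => Z i * ((m i : ℝ))⁻¹
    have h2 : ∑ i, (m i : ℝ) * (Z i * (m i : ℝ)⁻¹) = ∑ i, Z i := by
      refine Finset.sum_congr rfl fun i _ => ?_
      rw [mul_comm, mul_assoc, inv_mul_cancel₀ (hmz i), mul_one]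
    show ∑ I, (mEmb Q Z) I = 0
    rw [h1, h2]; exact hZ
  have hA := hinv n N hn hNn Q hmp p hp X hX Y hY
  rw [hpemb] at hA
  have hBu : IsSymmBilin (A N (bunif N)) := hsymm N hN (bunif N) (bunif_mem hN)
  have hperm : ∀ σ : Equiv.Perm (Fin (N + 1)), ∀ X' ∈ Tang N, ∀ Y' ∈ Tang N,
      A N (bunif N) (fun k => X' (σ k)) (fun k => Y' (σ k)) = A N (bunif N) X' Y' := by
    intro σ X' hX' Y' hY'
    have h := perm_inv A hinv hN σ (bunif_mem hN) hX' hY'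
    exact h
  have hXY := bilin_struct hN hBu hperm (hTangQ X hX) (hTangQ Y hY)
  have hsum : ∑ I, (mEmb Q X) I * (mEmb Q Y) I = ∑ i, X i * Y i / (m i : ℝ) := by
    have h1 : ∑ I, (mEmb Q X) I * (mEmb Q Y) I = ∑ I : Fin (N + 1),
        (fun i => (X i * (m i : ℝ)⁻¹) * (Y i * (m i : ℝ)⁻¹)) ((e I).1) := by
      refine Finset.sum_congr rfl fun I _ => ?_
      rw [hembp, hembp]
    rw [h1]
    refine (hcount (fun i => X i * ((m i : ℝ))⁻¹ * (Y i * ((m i : ℝ))⁻¹))).trans ?_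
    refine Finset.sum_congr rfl fun i _ => ?_
    have h := hmz i
    field_simp
  calc A n p X Y = A N (bunif N) (mEmb Q X) (mEmb Q Y) := hA.symm
    _ = A N (bunif N) (dv N 1) (dv N 1) / 2 * ∑ I, (mEmb Q X) I * (mEmb Q Y) I := hXY
    _ = A N (bunif N) (dv N 1) (dv N 1) / 2 * ∑ i, X i * Y i / (m i : ℝ) := by rw [hsum]

end Main

section Main2

variable (A : (n : ℕ) → (Fin (n + 1) → ℝ) → (Fin (n + 1) → ℝ) → (Fin (n + 1) → ℝ) → ℝ)

lemma scale_step (hsymm : SymmTF A) (hinv : MarkovInv A) {n K N' : ℕ} (hn : 0 < n)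
    (hK : 0 < K) (h : (n + 1) * K = N' + 1) :
    A N' (bunif N') (dv N' 1) (dv N' 1) = K * A n (bunif n) (dv n 1) (dv n 1) := by
  have hKr : ((K : ℝ)) ≠ 0 := Nat.cast_ne_zero.mpr hK.ne'
  have h1 := rat_formula A hsymm hinv hn (fun _ => K) (fun _ => hK)
    (by simpa [Finset.sum_const, Finset.card_univ, mul_comm] using h)
    (dv_mem_Tang n 1) (dv_mem_Tang n 1)
  have hpe : (fun (_ : Fin (n + 1)) => (K : ℝ) / ((N' : ℝ) + 1)) = bunif n := by
    funext i
    have hcast : ((N' : ℝ) + 1) = ((n : ℝ) + 1) * K := by exact_mod_cast h.symm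
    rw [bunif, hcast]
    rw [div_eq_div_iff (by positivity) (by positivity)]
    ring
  have hds : ∑ i, dv n 1 i * dv n 1 i / (K : ℝ) = 2 / K := by
    have hn' : n ≠ 0 := hn.ne'
    have hterm : ∀ i : Fin (n + 1), dv n 1 i * dv n 1 i =
        (if i = 0 then (1 : ℝ) else 0) + (if i = 1 then (1 : ℝ) else 0) := by
      intro i
      by_cases h0 : i = 0
      · have h1' : i ≠ 1 := by rw [h0]; exact (one_ne_zero_fin hn).symm
        simp [dv, h0, h1', hn']
      · by_cases h1' : i = 1
        · simp [dv, h0, h1', hn']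
        · simp [dv, h0, h1']
    rw [Finset.sum_congr rfl fun i _ => by rw [hterm i], ← Finset.sum_div,
      Finset.sum_add_distrib]
    simp [Finset.sum_ite_eq']
    norm_num
  rw [hpe, hds] at h1
  rw [h1]
  field_simp
  try ring

lemma aa_eq (hsymm : SymmTF A) (hinv : MarkovInv A) {N : ℕ} (hN : 0 < N) :
    A N (bunif N) (dv N 1) (dv N 1) =
      ((N : ℝ) + 1) * A 1 (bunif 1) (dv 1 1) (dv 1 1) / 2 := by
  have h1 := scale_step A hsymm hinv (n := 1) (K := N + 1) (N' := 2 * N + 1)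
    one_pos (Nat.succ_pos N) (by ring)
  have h2 := scale_step A hsymm hinv (n := N) (K := 2) (N' := 2 * N + 1)
    hN two_pos (by ring)
  rw [h2] at h1
  push_cast at h1
  linarith

lemma rational_case (hsymm : SymmTF A) (hinv : MarkovInv A) {n N : ℕ} (hn : 0 < n)
    (m : Fin (n + 1) → ℕ) (hm : ∀ i, 0 < m i) (hM : ∑ i, m i = N + 1)
    {X Y : Fin (n + 1) → ℝ} (hX : X ∈ Tang n) (hY : Y ∈ Tang n) :
    A n (fun i => (m i : ℝ) / (N + 1)) X Y =
      A 1 (bunif 1) (dv 1 1) (dv 1 1) / 4 * Fish n (fun i => (m i : ℝ) / (N + 1)) X Y := by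
  have hNn : n ≤ N := by
    have h1 : n + 1 ≤ ∑ i, m i := by
      calc n + 1 = ∑ _i : Fin (n + 1), 1 := by simp
      _ ≤ ∑ i, m i := Finset.sum_le_sum fun i _ => hm i
    omega
  have hN : 0 < N := lt_of_lt_of_le hn hNn
  have hmz : ∀ i, (m i : ℝ) ≠ 0 := fun i => Nat.cast_ne_zero.mpr (hm i).ne'
  rw [rat_formula A hsymm hinv hn m hm hM hX hY, aa_eq A hsymm hinv hN]
  have hFish : Fish n (fun i => (m i : ℝ) / (N + 1)) X Y =
      ((N : ℝ) + 1) * ∑ i, X i * Y i / (m i : ℝ) := by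
    rw [Fish, Finset.mul_sum]
    refine Finset.sum_congr rfl fun i _ => ?_
    have h := hmz i
    have hNr : ((N : ℝ) + 1) ≠ 0 := by positivity
    field_simp
  rw [hFish]
  ring

end Main2


/-- `A_n^{λ,μ} = λ A_n^d + μ A_n^s`. -/
def Alm (n : ℕ) (lam mu : ℝ) (p X Y : Fin (n + 1) → ℝ) : ℝ :=
  lam * Ad n p X Y + mu * As n p X Y
/-- **Čencov's theorem.** If `{A_n}` is a family of continuous symmetric
`(0,2)`-tensor fields on `P_n` such that the pullback of `A_N` by every Markov
embedding `F : P_n → P_N` (`n ≤ N`) equals `A_n`, then there is `λ ∈ ℝ` with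
`A_n = λ g_n^F` for every `n`. -/
theorem cencov_theorem
    (A : (n : ℕ) → (Fin (n + 1) → ℝ) → (Fin (n + 1) → ℝ) → (Fin (n + 1) → ℝ) → ℝ)
    (hsymm : SymmTF A)
    (hcont : ∀ n : ℕ, 0 < n → ∀ X Y : Fin (n + 1) → ℝ,
      ContinuousOn (fun p => A n p X Y) (Psim n))
    (hinv : ∀ n N : ℕ, 0 < n → n ≤ N → ∀ Q : Fin (n + 1) → Fin (N + 1) → ℝ,
      IsMarkovPartition Q → ∀ p ∈ Psim n, ∀ X ∈ Tang n, ∀ Y ∈ Tang n,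
        A N (mEmb Q p) (mEmb Q X) (mEmb Q Y) = A n p X Y) :
    ∃ lam : ℝ, ∀ n : ℕ, 0 < n → ∀ p ∈ Psim n, ∀ X ∈ Tang n, ∀ Y ∈ Tang n,
      A n p X Y = lam * Fish n p X Y := by
  classical
  have hinv' : MarkovInv A := hinv
  refine ⟨A 1 (bunif 1) (dv 1 1) (dv 1 1) / 4, ?_⟩
  intro n hn p hp X hX Y hY
  set lam := A 1 (bunif 1) (dv 1 1) (dv 1 1) / 4 with hlam
  set m : ℕ → Fin (n + 1) → ℕ := fun k i => ⌊(k : ℝ) * p i⌋₊ + 1 with hmdef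
  set Nk : ℕ → ℕ := fun k => (∑ i, m k i) - 1 with hNkdef
  have hMk : ∀ k, ∑ i, m k i = Nk k + 1 := by
    intro k
    have hpos : 0 < ∑ i, m k i :=
      Finset.sum_pos (fun i _ => Nat.succ_pos _) ⟨0, Finset.mem_univ 0⟩
    simp only [hNkdef]
    omega
  set q : ℕ → Fin (n + 1) → ℝ := fun k i => (m k i : ℝ) / ((Nk k : ℝ) + 1) with hqdef
  have hqP : ∀ k, q k ∈ Psim n :=
    fun k => rat_point_mem hn (m k) (fun i => Nat.succ_pos _) (hMk k)
  have hqA : ∀ k, A n (q k) X Y = lam * Fish n (q k) X Y :=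
    fun k => rational_case A hsymm hinv' hn (m k) (fun i => Nat.succ_pos _) (hMk k) hX hY
  have hppos : ∀ i, 0 < p i := fun i => (hp.1 i).1
  have hf : ∀ j : Fin (n + 1),
      Filter.Tendsto (fun k : ℕ => ((m k j : ℝ)) / (k : ℝ)) Filter.atTop (nhds (p j)) := by
    intro j
    have h1 : Filter.Tendsto (fun k : ℕ => ((⌊(k : ℝ) * p j⌋₊ : ℝ)) / (k : ℝ))
        Filter.atTop (nhds (p j)) := by
      have := (tendsto_nat_floor_mul_div_atTop (le_of_lt (hppos j))).comp
        (tendsto_natCast_atTop_atTop (R := ℝ))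
      simpa [Function.comp_def, mul_comm] using this
    have h2 : Filter.Tendsto (fun k : ℕ => (1 : ℝ) / (k : ℝ)) Filter.atTop (nhds 0) :=
      tendsto_one_div_atTop_nhds_zero_nat
    have h3 := h1.add h2
    simp only [add_zero] at h3
    refine h3.congr fun k => ?_
    rw [← add_div]
    simp [hmdef]
  have hcastM : ∀ k, ((Nk k : ℝ) + 1) = (((∑ j, m k j : ℕ)) : ℝ) := by
    intro k
    exact_mod_cast congrArg (Nat.cast (R := ℝ)) (hMk k).symm
  have hg : Filter.Tendsto (fun k : ℕ => ((Nk k : ℝ) + 1) / (k : ℝ)) Filter.atTop (nhds 1) := by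
    have hsum := tendsto_finset_sum (Finset.univ (α := Fin (n + 1)))
      (fun j (_ : j ∈ Finset.univ) => hf j)
    rw [hp.2] at hsum
    refine hsum.congr fun k => ?_
    rw [← Finset.sum_div, ← Nat.cast_sum, ← hcastM k]
  have htq : Filter.Tendsto q Filter.atTop (nhds p) := by
    rw [tendsto_pi_nhds]
    intro i
    have hdiv := (hf i).div hg one_ne_zero
    simp only [div_one] at hdiv
    refine hdiv.congr' ?_
    filter_upwards [Filter.eventually_ge_atTop 1] with k hk
    have hk0 : ((k : ℝ)) ≠ 0 := by
      have : (0 : ℝ) < k := by exact_mod_cast hk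
      exact this.ne'
    have hNk0 : ((Nk k : ℝ) + 1) ≠ 0 := by positivity
    rw [hqdef]
    simp only [Pi.div_apply]
    field_simp
  have hAl : Filter.Tendsto (fun k => A n (q k) X Y) Filter.atTop (nhds (A n p X Y)) := by
    have hc : ContinuousWithinAt (fun r => A n r X Y) (Psim n) p := (hcont n hn X Y) p hp
    exact hc.tendsto.comp (tendsto_nhdsWithin_iff.mpr ⟨htq, Filter.Eventually.of_forall hqP⟩)
  have hFl : Filter.Tendsto (fun k => lam * Fish n (q k) X Y) Filter.atTop
      (nhds (lam * Fish n p X Y)) := by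
    have hca : ContinuousAt (fun r : Fin (n + 1) → ℝ => lam * Fish n r X Y) p := by
      refine ContinuousAt.mul continuousAt_const ?_
      have : ∀ i : Fin (n + 1), ContinuousAt (fun r : Fin (n + 1) → ℝ => X i * Y i / r i) p :=
        fun i => ContinuousAt.div continuousAt_const (continuous_apply i).continuousAt
          (hppos i).ne'
      exact tendsto_finset_sum Finset.univ fun i _ => this i
    exact hca.tendsto.comp htq
  have hAl' : Filter.Tendsto (fun k => lam * Fish n (q k) X Y) Filter.atTop
      (nhds (A n p X Y)) := hAl.congr fun k => hqA k
  exact tendsto_nhds_unique hAl' hFl
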